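/- Every tree T with at least one edge is dispersable: mbt(T) = Δ(T). -/

import Mathlib

open SimpleGraph
open scoped Classical

/-- A matching book embedding of `G` in `k` pages: a linear order (spine) on the
vertices together with a page assignment for the edges such that each page is a
matching (every vertex has degree at most one per page) and edges on the same
page do not cross with respect to the spine order. -/
structure MatchingBookEmbedding {V : Type*} [Fintype V] (G : SimpleGraph V) (k : ℕ) where
  ord : V ≃ Fin (Fintype.card V)
  page : G.edgeSet → Fin k
  matching : ∀ e f : G.edgeSet, e ≠ f → page e = page f →
    ∀ v : V, v ∈ (e : Sym2 V) → v ∉ (f : Sym2 V)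
  noncross : ∀ e f : G.edgeSet, page e = page f →
    ∀ a b c d : V, (e : Sym2 V) = s(a, b) → (f : Sym2 V) = s(c, d) →
      ord a < ord c → ord c < ord b → ord b < ord d → False

/-- The matching book thickness: the minimum number of pages over all matching
book embeddings. -/
noncomputable def mbt {V : Type*} [Fintype V] (G : SimpleGraph V) : ℕ :=
  sInf {k | Nonempty (MatchingBookEmbedding G k)}

universe u

/-- In a finite acyclic graph, some vertex has at most one neighbor. -/
private lemma exists_near_unique {V : Type u} [Fintype V] [Nonempty V] {G : SimpleGraph V}
    (hG : G.IsAcyclic) : ∃ x : V, ∀ y z : V, G.Adj x y → G.Adj x z → y = z := by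
  classical
  set S : Set ℕ := {n | ∃ (u w : V) (p : G.Walk u w), p.IsPath ∧ p.length = n} with hS
  have hne : S.Nonempty :=
    ⟨0, Classical.arbitrary V, Classical.arbitrary V, Walk.nil, Walk.IsPath.nil, rfl⟩
  have hbdd : BddAbove S := by
    refine ⟨Fintype.card V, ?_⟩
    rintro n ⟨u, w, p, hp, rfl⟩
    exact hp.length_lt.le
  obtain ⟨x, w, p, hp, hlen⟩ := Nat.sSup_mem hne hbdd
  refine ⟨x, ?_⟩
  have key : ∀ y, G.Adj x y → y = p.getVert 1 := by
    intro y hy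
    have hmem : y ∈ p.support := by
      by_contra hns
      have hpath : (Walk.cons hy.symm p).IsPath := hp.cons hns
      have hmemS : p.length + 1 ∈ S := ⟨y, w, _, hpath, by simp⟩
      have := le_csSup hbdd hmemS
      omega
    have hq : (p.takeUntil y hmem).IsPath := hp.takeUntil hmem
    have hr : (Walk.cons hy Walk.nil : G.Walk x y).IsPath :=
      Walk.IsPath.nil.cons (by simp [hy.ne])
    have huniq := hG.path_unique ⟨_, hq⟩ ⟨_, hr⟩
    have heq : p.takeUntil y hmem = Walk.cons hy Walk.nil := congrArg Subtype.val huniq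
    have hsplit := p.take_spec hmem
    rw [heq] at hsplit
    have : p.getVert 1 = y := by
      rw [← hsplit]
      simp [Walk.cons_append, Walk.getVert_cons_succ, Walk.getVert_zero]
    exact this.symm
  intro y z hyz hxz
  rw [key y hyz, key z hxz]

private lemma acyclic_comap' {V : Type u} {W : Type*} (G : SimpleGraph W) (hG : G.IsAcyclic)
    (f : V ↪ W) : (G.comap f).IsAcyclic := by
  intro v c hc
  exact hG (c.map (SimpleGraph.Hom.comap f G)) (hc.map f.injective)

private lemma forest_embed : ∀ (n : ℕ) {V : Type u} [Fintype V] (G : SimpleGraph V),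
    Fintype.card V = n → G.IsAcyclic → ∀ k : ℕ,
    (∀ v : V, Nat.card (G.neighborSet v) ≤ k) →
    Nonempty (MatchingBookEmbedding G k) := by
  intro n
  induction n using Nat.strong_induction_on with
  | _ n IH =>
  intro V _ G hn hG k hk
  rcases Nat.eq_zero_or_pos n with rfl | hpos
  · -- empty vertex set
    haveI hE : IsEmpty V := Fintype.card_eq_zero_iff.mp hn
    have noe0 : ∀ s : Sym2 V, s ∈ G.edgeSet → False := by
      intro s
      induction s using Sym2.ind with
      | _ a b => exact fun _ => isEmptyElim a
    have noe : ∀ e : G.edgeSet, False := fun e => noe0 e.1 e.2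
    haveI : IsEmpty (Fin (Fintype.card V)) := by
      rw [hn]; exact ⟨fun i => i.elim0⟩
    exact ⟨⟨Equiv.equivOfIsEmpty V (Fin (Fintype.card V)), fun e => (noe e).elim,
      fun e => (noe e).elim, fun e => (noe e).elim⟩⟩
  · haveI : Nonempty V := Fintype.card_pos_iff.mp (hn ▸ hpos)
    obtain ⟨x, hx⟩ := exists_near_unique hG
    let V' := {y : V // y ≠ x}
    let G' : SimpleGraph V' := G.comap (Subtype.val)
    have hG' : G'.IsAcyclic :=
      acyclic_comap' G hG ⟨Subtype.val, Subtype.val_injective⟩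
    have hM1 : Fintype.card V' = Fintype.card V - 1 := by
      rw [Fintype.card_subtype_compl, Fintype.card_subtype_eq]
    set M := Fintype.card V' with hMdef
    have hVM : Fintype.card V = M + 1 := by omega
    have hk' : ∀ v' : V', Nat.card (G'.neighborSet v') ≤ k := by
      intro v'
      refine le_trans (Nat.card_le_card_of_injective
        (fun y : ↥(G'.neighborSet v') => (⟨y.1.1, y.2⟩ : ↥(G.neighborSet v'.1))) ?_) (hk v'.1)
      intro y1 y2 h12
      have h13 : y1.1.1 = y2.1.1 := congrArg (fun z : ↥(G.neighborSet v'.1) => z.1) h12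
      exact Subtype.ext (Subtype.ext h13)
    obtain ⟨B'⟩ := IH M (by omega) G' rfl hG' k hk'
    -- lifting of edges avoiding x
    have lift : ∀ (e : G.edgeSet), x ∉ (e : Sym2 V) →
        ∃ e' : G'.edgeSet, Sym2.map Subtype.val (e' : Sym2 V') = (e : Sym2 V) := by
      have : ∀ s : Sym2 V, s ∈ G.edgeSet → x ∉ s →
          ∃ e' : G'.edgeSet, Sym2.map Subtype.val (e' : Sym2 V') = s := by
        intro s
        induction s using Sym2.ind with
        | _ a b =>
          intro hs hxs
          have ha : a ≠ x := fun h => hxs (by rw [h]; exact Sym2.mem_mk_left _ _)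
          have hb : b ≠ x := fun h => hxs (by rw [h]; exact Sym2.mem_mk_right _ _)
          exact ⟨⟨s(⟨a, ha⟩, ⟨b, hb⟩), hs⟩, Sym2.map_pair_eq _ _ _⟩
      exact fun e he => this e.1 e.2 he
    let lift' : ∀ (e : G.edgeSet), x ∉ (e : Sym2 V) → G'.edgeSet :=
      fun e h => (lift e h).choose
    have lift'_spec : ∀ (e : G.edgeSet) (h : x ∉ (e : Sym2 V)),
        Sym2.map Subtype.val ((lift' e h : G'.edgeSet) : Sym2 V') = (e : Sym2 V) :=
      fun e h => (lift e h).choose_spec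
    have smapinj : Function.Injective (Sym2.map (Subtype.val : V' → V)) :=
      Sym2.map.injective Subtype.val_injective
    have memlift : ∀ (e : G.edgeSet) (h : x ∉ (e : Sym2 V)) (y : V) (hy : y ≠ x),
        y ∈ (e : Sym2 V) → (⟨y, hy⟩ : V') ∈ ((lift' e h : G'.edgeSet) : Sym2 V') := by
      intro e h y hy hmem
      rw [← lift'_spec e h, Sym2.mem_map] at hmem
      obtain ⟨a, ha, hav⟩ := hmem
      rwa [show (⟨y, hy⟩ : V') = a from (Subtype.ext hav).symm]
    have lift_rep : ∀ (e : G.edgeSet) (h : x ∉ (e : Sym2 V)) (a b : V)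
        (hab : (e : Sym2 V) = s(a, b)) (ha : a ≠ x) (hb : b ≠ x),
        ((lift' e h : G'.edgeSet) : Sym2 V') = s(⟨a, ha⟩, ⟨b, hb⟩) := by
      intro e h a b hab ha hb
      apply smapinj
      rw [lift'_spec e h, Sym2.map_pair_eq]
      exact hab
    have hnex : ∀ (e : G.edgeSet) (h : x ∉ (e : Sym2 V)) (a b : V),
        (e : Sym2 V) = s(a, b) → a ≠ x ∧ b ≠ x := by
      intro e h a b hab
      constructor
      · rintro rfl; exact h (by rw [hab]; exact Sym2.mem_mk_left _ _)
      · rintro rfl; exact h (by rw [hab]; exact Sym2.mem_mk_right _ _)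
    -- transfers
    have match' : ∀ (e f : G.edgeSet) (he : x ∉ (e : Sym2 V)) (hf : x ∉ (f : Sym2 V)),
        e ≠ f → B'.page (lift' e he) = B'.page (lift' f hf) →
        ∀ (v : V) (hv : v ≠ x), v ∈ (e : Sym2 V) → v ∉ (f : Sym2 V) := by
      intro e f he hf hef hpg v hv hve hvf
      have hne' : lift' e he ≠ lift' f hf := by
        intro hq
        apply hef
        apply Subtype.ext
        rw [← lift'_spec e he, ← lift'_spec f hf, hq]
      exact B'.matching _ _ hne' hpg ⟨v, hv⟩ (memlift e he v hv hve) (memlift f hf v hv hvf)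
    have noncross' : ∀ (e f : G.edgeSet) (he : x ∉ (e : Sym2 V)) (hf : x ∉ (f : Sym2 V)),
        B'.page (lift' e he) = B'.page (lift' f hf) →
        ∀ (a b c d : V) (ha : a ≠ x) (hb : b ≠ x) (hc : c ≠ x) (hd : d ≠ x),
        (e : Sym2 V) = s(a, b) → (f : Sym2 V) = s(c, d) →
        B'.ord ⟨a, ha⟩ < B'.ord ⟨c, hc⟩ → B'.ord ⟨c, hc⟩ < B'.ord ⟨b, hb⟩ →
        B'.ord ⟨b, hb⟩ < B'.ord ⟨d, hd⟩ → False := by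
      intro e f he hf hpg a b c d ha hb hc hd hab hcd h1 h2 h3
      exact B'.noncross _ _ hpg ⟨a, ha⟩ ⟨b, hb⟩ ⟨c, hc⟩ ⟨d, hd⟩
        (lift_rep e he a b hab ha hb) (lift_rep f hf c d hcd hc hd) h1 h2 h3
    -- building the new ordering for an arbitrary slot t'
    have mkequiv : ∀ t' : Fin (M + 1), ∃ ord : V ≃ Fin (Fintype.card V),
        ((ord x).val = t'.val ∧
          ∀ (y : V) (hy : y ≠ x), (ord y).val = (t'.succAbove (B'.ord ⟨y, hy⟩)).val) := by
      intro t'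
      let fmap : V → Fin (M + 1) :=
        fun y => if h : y = x then t' else t'.succAbove (B'.ord ⟨y, h⟩)
      have hinj : Function.Injective fmap := by
        intro a b hab
        by_cases ha : a = x <;> by_cases hb : b = x
        · rw [ha, hb]
        · exfalso
          rw [show fmap a = t' from dif_pos ha, show fmap b = _ from dif_neg hb] at hab
          exact (Fin.succAbove_ne t' _) hab.symm
        · exfalso
          rw [show fmap b = t' from dif_pos hb, show fmap a = _ from dif_neg ha] at hab
          exact (Fin.succAbove_ne t' _) hab
        · rw [show fmap a = _ from dif_neg ha, show fmap b = _ from dif_neg hb] at hab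
          have := B'.ord.injective (Fin.succAbove_right_injective hab)
          exact congrArg Subtype.val this
      have hbij : Function.Bijective fmap :=
        (Fintype.bijective_iff_injective_and_card fmap).mpr ⟨hinj, by simp [hVM]⟩
      refine ⟨(Equiv.ofBijective fmap hbij).trans (finCongr hVM.symm), ?_, ?_⟩
      · simp [fmap, Equiv.ofBijective]
      · intro y hy
        simp [fmap, Equiv.ofBijective, dif_neg hy]
    by_cases hux : ∃ u : V, G.Adj x u
    · -- x has a (unique) neighbor u
      obtain ⟨u, hu⟩ := hux
      -- edges through x are exactly s(x,u)
      have hxedge0 : ∀ s : Sym2 V, s ∈ G.edgeSet → x ∈ s → s = s(x, u) := by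
        intro s
        induction s using Sym2.ind with
        | _ a b =>
          intro hs hm
          rcases Sym2.mem_iff.mp hm with h | h
          · subst h
            rw [show b = u from hx b u hs hu]
          · subst h
            rw [show a = u from hx a u hs.symm hu, Sym2.eq_swap]
      have hxedge : ∀ e : G.edgeSet, x ∈ (e : Sym2 V) → (e : Sym2 V) = s(x, u) :=
        fun e => hxedge0 e.1 e.2
      -- a fresh color at u
      have hcex : ∃ c₀ : Fin k, ∀ e' : G'.edgeSet,
          (⟨u, hu.ne'⟩ : V') ∈ (e' : Sym2 V') → B'.page e' ≠ c₀ := by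
        by_contra hcon
        push_neg at hcon
        choose g hg1 hg2 using hcon
        have hadj : ∀ c : Fin k, G.Adj u (Sym2.Mem.other (hg1 c)).1 := by
          intro c
          have hsp := Sym2.other_spec (hg1 c)
          have : G'.Adj ⟨u, hu.ne'⟩ (Sym2.Mem.other (hg1 c)) := by
            rw [← SimpleGraph.mem_edgeSet, hsp]
            exact (g c).2
          exact this
        let φ : Fin k → ↥(G.neighborSet u) := fun c => ⟨(Sym2.Mem.other (hg1 c)).1, hadj c⟩
        have hφinj : Function.Injective φ := by
          intro c1 c2 hc
          have h13 : (Sym2.Mem.other (hg1 c1)).1 = (Sym2.Mem.other (hg1 c2)).1 :=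
            congrArg (fun z : ↥(G.neighborSet u) => z.1) hc
          have h12 : Sym2.Mem.other (hg1 c1) = Sym2.Mem.other (hg1 c2) :=
            Subtype.ext h13
          have hgg : g c1 = g c2 := by
            apply Subtype.ext
            rw [← Sym2.other_spec (hg1 c1), ← Sym2.other_spec (hg1 c2), h12]
          rw [← hg2 c1, ← hg2 c2, hgg]
        have hxmem : (⟨x, hu.symm⟩ : ↥(G.neighborSet u)) ∉ Set.range φ := by
          rintro ⟨c, hc⟩
          exact (Sym2.Mem.other (hg1 c)).2 (congrArg (fun z : ↥(G.neighborSet u) => z.1) hc)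
        have hlt2 := Fintype.card_lt_of_injective_of_notMem φ hφinj hxmem
        have hle2 : Nat.card ↥(G.neighborSet u) ≤ k := hk u
        rw [Fintype.card_fin] at hlt2
        rw [Nat.card_eq_fintype_card] at hle2
        omega
      obtain ⟨c₀, hc₀⟩ := hcex
      obtain ⟨ord, hox, hoy⟩ := mkequiv ((B'.ord ⟨u, hu.ne'⟩).succ)
      set P := (B'.ord ⟨u, hu.ne'⟩).val with hP
      have hvx : (ord x).val = P + 1 := by rw [hox, Fin.val_succ]
      have hvu : (ord u).val = P := by
        rw [hoy u hu.ne',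
          Fin.succAbove_of_castSucc_lt _ _ Fin.castSucc_lt_succ, Fin.coe_castSucc]
      have hmono : ∀ (y z : V) (hy : y ≠ x) (hz : z ≠ x),
          (ord y < ord z ↔ B'.ord ⟨y, hy⟩ < B'.ord ⟨z, hz⟩) := by
        intro y z hy hz
        rw [Fin.lt_def, hoy y hy, hoy z hz, ← Fin.lt_def, Fin.succAbove_lt_succAbove_iff]
      refine ⟨⟨ord,
        fun e => if h : x ∈ (e : Sym2 V) then c₀ else B'.page (lift' e h), ?_, ?_⟩⟩
      · -- matching
        intro e f hef hpg v hve hvf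
        split_ifs at hpg with h1 h2 h2
        · exact hef (Subtype.ext ((hxedge e h1).trans (hxedge f h2).symm))
        · -- x ∈ e, x ∉ f
          rw [hxedge e h1] at hve
          rcases Sym2.mem_iff.mp hve with rfl | rfl
          · exact h2 hvf
          · exact hc₀ (lift' f h2) (memlift f h2 v hu.ne' hvf) hpg.symm
        · -- x ∉ e, x ∈ f
          rw [hxedge f h2] at hvf
          rcases Sym2.mem_iff.mp hvf with rfl | rfl
          · exact h1 hve
          · exact hc₀ (lift' e h1) (memlift e h1 v hu.ne' hve) hpg
        · have hv : v ≠ x := fun h => h1 (h ▸ hve)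
          exact match' e f h1 h2 hef hpg v hv hve hvf
      · -- noncross
        intro e f hpg a b c d hab hcd h1 h2 h3
        have n1 : (ord a).val < (ord c).val := h1
        have n2 : (ord c).val < (ord b).val := h2
        have n3 : (ord b).val < (ord d).val := h3
        by_cases he : x ∈ (e : Sym2 V)
        · have hE : s(a, b) = s(x, u) := hab.symm.trans (hxedge e he)
          rcases Sym2.eq_iff.mp hE with ⟨rfl, rfl⟩ | ⟨rfl, rfl⟩
          · rw [hvx] at n1; rw [hvu] at n2; omega
          · rw [hvu] at n1; rw [hvx] at n2; omega
        · by_cases hf : x ∈ (f : Sym2 V)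
          · have hF : s(c, d) = s(x, u) := hcd.symm.trans (hxedge f hf)
            rcases Sym2.eq_iff.mp hF with ⟨rfl, rfl⟩ | ⟨rfl, rfl⟩
            · rw [hvx] at n2; rw [hvu] at n3; omega
            · rw [hvu] at n2; rw [hvx] at n3; omega
          · rw [dif_neg he, dif_neg hf] at hpg
            obtain ⟨ha, hb⟩ := hnex e he a b hab
            obtain ⟨hc, hd⟩ := hnex f hf c d hcd
            exact noncross' e f he hf hpg a b c d ha hb hc hd hab hcd
              ((hmono a c ha hc).mp h1) ((hmono c b hc hb).mp h2) ((hmono b d hb hd).mp h3)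
    · -- x is isolated
      have noex : ∀ e : G.edgeSet, x ∉ (e : Sym2 V) := by
        intro e hm
        have : ∀ s : Sym2 V, s ∈ G.edgeSet → x ∈ s → False := by
          intro s
          induction s using Sym2.ind with
          | _ a b =>
            intro hs hm
            rcases Sym2.mem_iff.mp hm with h | h
            · exact hux ⟨b, h ▸ hs⟩
            · exact hux ⟨a, h ▸ hs.symm⟩
        exact this e.1 e.2 hm
      obtain ⟨ord, hox, hoy⟩ := mkequiv (Fin.last M)
      have hmono : ∀ (y z : V) (hy : y ≠ x) (hz : z ≠ x),
          (ord y < ord z ↔ B'.ord ⟨y, hy⟩ < B'.ord ⟨z, hz⟩) := by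
        intro y z hy hz
        rw [Fin.lt_def, hoy y hy, hoy z hz, ← Fin.lt_def, Fin.succAbove_lt_succAbove_iff]
      refine ⟨⟨ord, fun e => B'.page (lift' e (noex e)), ?_, ?_⟩⟩
      · intro e f hef hpg v hve hvf
        have hv : v ≠ x := fun h => noex e (h ▸ hve)
        exact match' e f (noex e) (noex f) hef hpg v hv hve hvf
      · intro e f hpg a b c d hab hcd h1 h2 h3
        obtain ⟨ha, hb⟩ := hnex e (noex e) a b hab
        obtain ⟨hc, hd⟩ := hnex f (noex f) c d hcd
        exact noncross' e f (noex e) (noex f) hpg a b c d ha hb hc hd hab hcd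
          ((hmono a c ha hc).mp h1) ((hmono c b hc hb).mp h2) ((hmono b d hb hd).mp h3)

/-- Every tree with at least one edge is dispersable: `mbt T = Δ(T)`. -/
theorem stmt_13 {V : Type*} [Fintype V] (T : SimpleGraph V) [DecidableRel T.Adj]
    (htree : T.IsTree) (hedge : T.edgeSet.Nonempty) :
    mbt T = T.maxDegree := by
  have hub : T.maxDegree ∈ {k | Nonempty (MatchingBookEmbedding T k)} := by
    refine forest_embed (Fintype.card V) T rfl htree.IsAcyclic _ (fun v => ?_)
    have h1 : Nat.card ↥(T.neighborSet v) = T.degree v := by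
      rw [Nat.card_eq_fintype_card, card_neighborSet_eq_degree]
    rw [h1]
    exact T.degree_le_maxDegree v
  have hlb : ∀ kk ∈ {k | Nonempty (MatchingBookEmbedding T k)}, T.maxDegree ≤ kk := by
    intro kk hkk
    obtain ⟨B⟩ := hkk
    haveI : Nonempty V := htree.isConnected.nonempty
    obtain ⟨v, hv⟩ := T.exists_maximal_degree_vertex
    have key : Function.Injective
        (fun y : ↥(T.neighborSet v) => B.page ⟨s(v, y.1), T.mem_edgeSet.mpr y.2⟩) := by
      intro y1 y2 hy
      by_contra hne12
      have hedgene : (⟨s(v, y1.1), T.mem_edgeSet.mpr y1.2⟩ : T.edgeSet) ≠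
          ⟨s(v, y2.1), T.mem_edgeSet.mpr y2.2⟩ := by
        intro hq
        have hval : s(v, y1.1) = s(v, y2.1) := congrArg Subtype.val hq
        rcases Sym2.eq_iff.mp hval with ⟨-, h⟩ | ⟨h1, h2⟩
        · exact hne12 (Subtype.ext h)
        · exact hne12 (Subtype.ext (h2.trans h1))
      exact B.matching _ _ hedgene hy v (Sym2.mem_mk_left _ _) (Sym2.mem_mk_left _ _)
    have hcard : Fintype.card ↥(T.neighborSet v) ≤ kk := by
      simpa using Fintype.card_le_of_injective _ key
    rw [card_neighborSet_eq_degree] at hcard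
    omega
  refine le_antisymm (Nat.sInf_le hub) ?_
  exact hlb _ (Nat.sInf_mem ⟨_, hub⟩)
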